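/- Consider the Parasol-Umbrella game: leader has actions {0,1} and minimizes the sum of two followers' payoffs; follower 1's payoffs are (4,2;0,2) and follower 2's are (2,0;2,5) (rows indexed by leader actions 0,1; columns by the follower's two actions). For every precise commitment p ∈ [0,1], the sum of the two followers' best-response payoffs (with follower-favorable tie-breaking when indifferent choosing any best response) is at least 4, with strict inequality unless the followers choose the leader-favorable actions at the indifference points; whereas the fully ambiguous commitment Δ({0,1}) yields worst-case total payoff exactly 4. Hence the fully ambiguous commitment weakly dominates every precise commitment for the minimizing leader. -/
import Mathlib


/-- Follower 1's payoff matrix in the Parasol-Umbrella game (rows = leader actions). -/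
noncomputable def PU1 : Fin 2 → Fin 2 → ℝ := ![![4, 2], ![0, 2]]

/-- Follower 2's payoff matrix in the Parasol-Umbrella game (rows = leader actions). -/
noncomputable def PU2 : Fin 2 → Fin 2 → ℝ := ![![2, 0], ![2, 5]]

/-- Expected payoff of follower action `b` against leader mixture `p` (prob. of action 1). -/
noncomputable def Epay (M : Fin 2 → Fin 2 → ℝ) (p : ℝ) (b : Fin 2) : ℝ :=
  (1 - p) * M 0 b + p * M 1 b

lemma E10 (p : ℝ) : Epay PU1 p 0 = 4 - 4 * p := by simp [Epay, PU1]; ring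
lemma E11 (p : ℝ) : Epay PU1 p 1 = 2 := by simp [Epay, PU1]; ring
lemma E20 (p : ℝ) : Epay PU2 p 0 = 2 := by simp [Epay, PU2]; ring
lemma E21 (p : ℝ) : Epay PU2 p 1 = 5 * p := by simp [Epay, PU2]; ring

/-- Parasol-Umbrella game: for every precise commitment `p ∈ [0,1]` and any best responses
of the two followers, the minimizing leader's payoff (sum of follower payoffs) is at least
`4`; follower 1's second action and follower 2's first action are maximin responses to the
fully ambiguous commitment `[0,1]`; and the fully ambiguous commitment yields worst-case
total payoff exactly `4`.  Hence full ambiguity weakly dominates every precise commitment. -/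
theorem stmt12 :
    (∀ p ∈ Set.Icc (0:ℝ) 1, ∀ b c : Fin 2,
      (∀ b' : Fin 2, Epay PU1 p b' ≤ Epay PU1 p b) →
      (∀ c' : Fin 2, Epay PU2 p c' ≤ Epay PU2 p c) →
      4 ≤ Epay PU1 p b + Epay PU2 p c) ∧
    (∀ q ∈ stdSimplex ℝ (Fin 2),
      sInf ((fun p => q 0 * Epay PU1 p 0 + q 1 * Epay PU1 p 1) '' Set.Icc (0:ℝ) 1) ≤
      sInf ((fun p => Epay PU1 p 1) '' Set.Icc (0:ℝ) 1)) ∧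
    (∀ q ∈ stdSimplex ℝ (Fin 2),
      sInf ((fun p => q 0 * Epay PU2 p 0 + q 1 * Epay PU2 p 1) '' Set.Icc (0:ℝ) 1) ≤
      sInf ((fun p => Epay PU2 p 0) '' Set.Icc (0:ℝ) 1)) ∧
    sSup ((fun p => Epay PU1 p 1 + Epay PU2 p 0) '' Set.Icc (0:ℝ) 1) = 4 := by
  have h1mem : (1:ℝ) ∈ Set.Icc (0:ℝ) 1 := by constructor <;> norm_num
  have h0mem : (0:ℝ) ∈ Set.Icc (0:ℝ) 1 := by constructor <;> norm_num
  refine ⟨?_, ?_, ?_, ?_⟩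
  · intro p hp b c hb hc
    have h1 := hb 1
    have h2 := hc 0
    rw [E11] at h1
    rw [E20] at h2
    linarith
  · intro q hq
    obtain ⟨hq0, hqs⟩ := hq
    have hs : q 0 + q 1 = 1 := by
      have := hqs; rwa [Fin.sum_univ_two] at this
    have hrhs : ((fun p : ℝ => Epay PU1 p 1) '' Set.Icc (0:ℝ) 1) = {2} := by
      have : (fun p : ℝ => Epay PU1 p 1) = fun _ => (2:ℝ) := funext E11
      rw [this]
      exact Set.Nonempty.image_const ⟨0, h0mem⟩ 2
    rw [hrhs, csInf_singleton]
    have hbdd : BddBelow ((fun p => q 0 * Epay PU1 p 0 + q 1 * Epay PU1 p 1) '' Set.Icc (0:ℝ) 1) := by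
      refine ⟨0, ?_⟩
      rintro x ⟨p, hp, rfl⟩
      have h0 := hq0 0
      have h1 := hq0 1
      show 0 ≤ q 0 * Epay PU1 p 0 + q 1 * Epay PU1 p 1
      rw [E10, E11]
      nlinarith [hp.1, hp.2]
    have hle : sInf ((fun p => q 0 * Epay PU1 p 0 + q 1 * Epay PU1 p 1) '' Set.Icc (0:ℝ) 1)
        ≤ q 0 * Epay PU1 1 0 + q 1 * Epay PU1 1 1 :=
      csInf_le hbdd ⟨1, h1mem, rfl⟩
    have : q 0 * Epay PU1 1 0 + q 1 * Epay PU1 1 1 ≤ 2 := by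
      rw [E10, E11]
      have h0 := hq0 0
      nlinarith
    linarith
  · intro q hq
    obtain ⟨hq0, hqs⟩ := hq
    have hs : q 0 + q 1 = 1 := by
      have := hqs; rwa [Fin.sum_univ_two] at this
    have hrhs : ((fun p : ℝ => Epay PU2 p 0) '' Set.Icc (0:ℝ) 1) = {2} := by
      have : (fun p : ℝ => Epay PU2 p 0) = fun _ => (2:ℝ) := funext E20
      rw [this]
      exact Set.Nonempty.image_const ⟨0, h0mem⟩ 2
    rw [hrhs, csInf_singleton]
    have hbdd : BddBelow ((fun p => q 0 * Epay PU2 p 0 + q 1 * Epay PU2 p 1) '' Set.Icc (0:ℝ) 1) := by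
      refine ⟨0, ?_⟩
      rintro x ⟨p, hp, rfl⟩
      have h0 := hq0 0
      have h1 := hq0 1
      show 0 ≤ q 0 * Epay PU2 p 0 + q 1 * Epay PU2 p 1
      rw [E20, E21]
      nlinarith [hp.1, hp.2]
    have hle : sInf ((fun p => q 0 * Epay PU2 p 0 + q 1 * Epay PU2 p 1) '' Set.Icc (0:ℝ) 1)
        ≤ q 0 * Epay PU2 0 0 + q 1 * Epay PU2 0 1 :=
      csInf_le hbdd ⟨0, h0mem, rfl⟩
    have : q 0 * Epay PU2 0 0 + q 1 * Epay PU2 0 1 ≤ 2 := by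
      rw [E20, E21]
      have h1 := hq0 1
      nlinarith
    linarith
  · have : (fun p : ℝ => Epay PU1 p 1 + Epay PU2 p 0) = fun _ => (4:ℝ) := by
      funext p; rw [E11, E20]; norm_num
    rw [this, Set.Nonempty.image_const ⟨0, h0mem⟩ 4, csSup_singleton]
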